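/- Let t: Dom(t) ⊆ E → F be a densely defined adjointable operator between Hilbert A-modules, and let V: E ⊕ F → F ⊕ E be the unitary V(x,y) = (y,−x). If the graph G(t) is orthogonally complemented in E ⊕ F, then the orthogonal complement of V(G(t)) in F ⊕ E equals the graph G(t*) of the adjoint, so that F ⊕ E = V(G(t)) ⊕ G(t*). -/

import Mathlib

/- Framework: Hilbert C*-modules over a C*-algebra `A` (via Mathlib's `CStarModule`),
densely defined operators as `LinearPMap`s, `A`-valued orthogonality, adjoints,
regularity, graphs inside `E ⊕ F`. -/

open scoped InnerProductSpace RightActions WithCStarModule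

/-- The Hilbert C⋆-module class as it stood in the older library: a right `A`-module
structure via `Aᵐᵒᵖ`, with `⟪x, y <• a⟫ = ⟪x, y⟫ * a`, and `A` an `outParam`. -/
class CStarModuleOld (A : outParam Type*) (E : Type*) [NonUnitalSemiring A] [StarRing A]
    [Module ℂ A] [AddCommGroup E] [Module ℂ E] [PartialOrder A] [SMul Aᵐᵒᵖ E] [Norm A] [Norm E]
    extends Inner A E where
  inner_add_right {x} {y} {z} : inner x (y + z) = inner x y + inner x z
  inner_self_nonneg {x} : 0 ≤ inner x x
  inner_self {x} : inner x x = 0 ↔ x = 0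
  inner_op_smul_right {a : A} {x y : E} : inner x (y <• a) = inner x y * a
  inner_smul_right_complex {z : ℂ} {x} {y} : inner x (z • y) = z • inner x y
  star_inner x y : star (inner x y) = inner y x
  norm_eq_sqrt_norm_inner_self x : ‖x‖ = √‖inner x x‖

/-- An old-style Hilbert `A`-module is a current-style `CStarModule` over `Aᵐᵒᵖ`. -/
noncomputable instance CStarModuleOld.toCStarModuleOp {A E : Type*} [NonUnitalCStarAlgebra A]
    [PartialOrder A] [AddCommGroup E] [Module ℂ E] [SMul Aᵐᵒᵖ E] [Norm E] [CStarModuleOld A E] : CStarModule Aᵐᵒᵖ E where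
  inner x y := MulOpposite.op (inner A x y)
  inner_add_right := by
    intro x y z
    simp [CStarModuleOld.inner_add_right]
  inner_self_nonneg := CStarModuleOld.inner_self_nonneg
  inner_self := by
    intro x
    simp [CStarModuleOld.inner_self]
  inner_op_smul_right := by
    intro a x y
    apply MulOpposite.unop_injective
    exact CStarModuleOld.inner_op_smul_right (a := MulOpposite.unop a)
  inner_smul_right_complex := by
    intro z x y
    apply MulOpposite.unop_injective
    exact CStarModuleOld.inner_smul_right_complex
  star_inner x y := by
    apply MulOpposite.unop_injective
    exact CStarModuleOld.star_inner x y
  norm_eq_sqrt_norm_inner_self x := CStarModuleOld.norm_eq_sqrt_norm_inner_self x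

/-- The type synonym `C⋆ᵐᵒᵈ E` of the older library. -/
def WithCStarModuleOld (E : Type*) := E

notation "C⋆ᵐᵒᵈ" => WithCStarModuleOld

/-- The canonical equivalence between `C⋆ᵐᵒᵈ E` and `E`. -/
def WithCStarModuleOld.equiv (E : Type*) : C⋆ᵐᵒᵈ E ≃ E := Equiv.refl _

instance WithCStarModuleOld.instAddCommGroup (E : Type*) [AddCommGroup E] :
    AddCommGroup (C⋆ᵐᵒᵈ E) := ‹AddCommGroup E›

instance WithCStarModuleOld.instModule (R E : Type*) [Semiring R] [AddCommGroup E]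
    [Module R E] : Module R (C⋆ᵐᵒᵈ E) := ‹Module R E›

instance WithCStarModuleOld.instSMul (R E : Type*) [SMul R E] : SMul R (C⋆ᵐᵒᵈ E) :=
  ‹SMul R E›

section OldProd

variable {A : Type*} [NonUnitalCStarAlgebra A] [PartialOrder A] [StarOrderedRing A]
variable {E F : Type*}
  [NormedAddCommGroup E] [Module ℂ E] [SMul Aᵐᵒᵖ E] [CStarModuleOld A E]
  [NormedAddCommGroup F] [Module ℂ F] [SMul Aᵐᵒᵖ F] [CStarModuleOld A F]

noncomputable instance WithCStarModuleOld.instNormedAddCommGroupProd :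
    NormedAddCommGroup (C⋆ᵐᵒᵈ (E × F)) :=
  inferInstanceAs (NormedAddCommGroup (WithCStarModule Aᵐᵒᵖ (E × F)))

/-- The old `CStarModule A (C⋆ᵐᵒᵈ (E × F))`, with `⟪x, y⟫ = ⟪x.1, y.1⟫ + ⟪x.2, y.2⟫`. -/
noncomputable instance WithCStarModuleOld.instCStarModuleProd :
    CStarModuleOld A (C⋆ᵐᵒᵈ (E × F)) where
  inner x y := inner A (WithCStarModuleOld.equiv _ x).1 (WithCStarModuleOld.equiv _ y).1 +
    inner A (WithCStarModuleOld.equiv _ x).2 (WithCStarModuleOld.equiv _ y).2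
  inner_add_right {x y z} := congrArg MulOpposite.unop
    (CStarModule.inner_add_right (A := Aᵐᵒᵖ) (E := WithCStarModule Aᵐᵒᵖ (E × F))
      (x := x) (y := y) (z := z))
  inner_self_nonneg {x} :=
    CStarModule.inner_self_nonneg (A := Aᵐᵒᵖ) (E := WithCStarModule Aᵐᵒᵖ (E × F)) (x := x)
  inner_self {x} := (MulOpposite.op_eq_zero_iff _).symm.trans
    (CStarModule.inner_self (A := Aᵐᵒᵖ) (E := WithCStarModule Aᵐᵒᵖ (E × F)) (x := x))
  inner_op_smul_right {a x y} := congrArg MulOpposite.unop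
    (CStarModule.inner_op_smul_right (A := Aᵐᵒᵖ) (E := WithCStarModule Aᵐᵒᵖ (E × F))
      (a := MulOpposite.op a) (x := x) (y := y))
  inner_smul_right_complex {z x y} := congrArg MulOpposite.unop
    (CStarModule.inner_smul_right_complex (A := Aᵐᵒᵖ) (E := WithCStarModule Aᵐᵒᵖ (E × F))
      (z := z) (x := x) (y := y))
  star_inner x y := congrArg MulOpposite.unop
    (CStarModule.star_inner (A := Aᵐᵒᵖ) (E := WithCStarModule Aᵐᵒᵖ (E × F)) x y)
  norm_eq_sqrt_norm_inner_self x :=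
    CStarModule.norm_eq_sqrt_norm_inner_self (A := Aᵐᵒᵖ) (E := WithCStarModule Aᵐᵒᵖ (E × F)) x

end OldProd

namespace RegularOperators

variable (A : Type*) [NonUnitalCStarAlgebra A] [PartialOrder A] [StarOrderedRing A]

section Defs

variable {E F : Type*}
  [NormedAddCommGroup E] [Module ℂ E] [SMul Aᵐᵒᵖ E] [CStarModuleOld A E]
  [NormedAddCommGroup F] [Module ℂ F] [SMul Aᵐᵒᵖ F] [CStarModuleOld A F]

/-- Orthogonal complement of a subset w.r.t. the `A`-valued inner product. -/
def ortho (S : Set E) : Set E := {y | ∀ u ∈ S, ⟪u, y⟫_A = 0}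

/-- `S` is orthogonally complemented (an orthogonal summand): every element of `E`
decomposes as a sum of an element of `S` and an element of `S^⊥`. -/
def OrthoComplemented (S : Set E) : Prop := ∀ z : E, ∃ u ∈ S, ∃ v ∈ ortho A S, z = u + v

/-- A partially defined operator is `A`-linear (for the right `A`-module action). -/
def AModuleMap (t : E →ₗ.[ℂ] F) : Prop :=
  ∀ (a : A) (x : t.domain), ∃ hx : (x : E) <• a ∈ t.domain, t ⟨(x : E) <• a, hx⟩ = (t x) <• a

/-- Kernel of a partially defined operator, as a subset of `E`. -/
def kerSet (t : E →ₗ.[ℂ] F) : Set E := {x | ∃ hx : x ∈ t.domain, t ⟨x, hx⟩ = 0}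

/-- Range of a partially defined operator. -/
def ranSet (t : E →ₗ.[ℂ] F) : Set F := {y | ∃ x : t.domain, t x = y}

/-- Domain of the adjoint: those `y` for which some `z` satisfies `⟪tx, y⟫ = ⟪x, z⟫`
for all `x` in the domain of `t`. -/
def adjDomain (t : E →ₗ.[ℂ] F) : Set F :=
  {y | ∃ z : E, ∀ x : t.domain, ⟪t x, y⟫_A = ⟪(x : E), z⟫_A}

/-- `s` is the adjoint operator `t*` of `t`. -/
structure IsAdjoint (t : E →ₗ.[ℂ] F) (s : F →ₗ.[ℂ] E) : Prop where
  dom : (s.domain : Set F) = adjDomain A t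
  inner_eq : ∀ (x : t.domain) (y : s.domain), ⟪t x, (y : F)⟫_A = ⟪(x : E), s y⟫_A

/-- The range of `1 + t*t` (where `s` plays the role of `t*`). -/
def onePlusRange (t : E →ₗ.[ℂ] F) (s : F →ₗ.[ℂ] E) : Set E :=
  {u | ∃ (x : t.domain) (h : t x ∈ s.domain), (x : E) + s ⟨t x, h⟩ = u}

/-- `t` is a regular operator with adjoint `s`: it is `A`-linear, densely defined,
closed, adjointable with densely defined adjoint, and `1 + t*t` has dense range. -/
structure IsRegular (t : E →ₗ.[ℂ] F) (s : F →ₗ.[ℂ] E) : Prop where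
  amod : AModuleMap A t
  denseDom : Dense (t.domain : Set E)
  closedGraph : IsClosed (t.graph : Set (E × F))
  adj : IsAdjoint A t s
  denseAdjDom : Dense (s.domain : Set F)
  denseOnePlusRange : Dense (onePlusRange t s)

/-- The graph of `t` inside the Hilbert `A`-module `E ⊕ F`. -/
def graphSet (t : E →ₗ.[ℂ] F) : Set (C⋆ᵐᵒᵈ (E × F)) :=
  {w | ∃ x : t.domain, WithCStarModuleOld.equiv (E × F) w = ((x : E), t x)}

/-- The range of `P_F ∘ P_{G(t)^⊥}`, i.e. the image of `G(t)^⊥ ⊆ E ⊕ F` under the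
canonical projection onto `F`. -/
def pfRange (t : E →ₗ.[ℂ] F) : Set F :=
  {y | ∃ w ∈ ortho A (graphSet t), (WithCStarModuleOld.equiv (E × F) w).2 = y}

end Defs

end RegularOperators

open RegularOperators
variable {A : Type*} [NonUnitalCStarAlgebra A] [PartialOrder A] [StarOrderedRing A]
variable {E F : Type*}
  [NormedAddCommGroup E] [Module ℂ E] [SMul Aᵐᵒᵖ E] [CStarModuleOld A E] [CompleteSpace E]
  [NormedAddCommGroup F] [Module ℂ F] [SMul Aᵐᵒᵖ F] [CStarModuleOld A F] [CompleteSpace F]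

theorem old_inner_sub_left (x y z : E) : ⟪x - y, z⟫_A = ⟪x, z⟫_A - ⟪y, z⟫_A :=
  congrArg MulOpposite.unop (CStarModule.inner_sub_left (A := Aᵐᵒᵖ) (E := E) (x := x) (y := y) (z := z))
theorem old_inner_sub_right (x y z : E) : ⟪x, y - z⟫_A = ⟪x, y⟫_A - ⟪x, z⟫_A :=
  congrArg MulOpposite.unop (CStarModule.inner_sub_right (A := Aᵐᵒᵖ) (E := E) (x := x) (y := y) (z := z))
theorem old_inner_neg_left (x y : E) : ⟪-x, y⟫_A = -⟪x, y⟫_A :=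
  congrArg MulOpposite.unop (CStarModule.inner_neg_left (A := Aᵐᵒᵖ) (E := E) (x := x) (y := y))
theorem old_inner_neg_right (x y : E) : ⟪x, -y⟫_A = -⟪x, y⟫_A :=
  congrArg MulOpposite.unop (CStarModule.inner_neg_right (A := Aᵐᵒᵖ) (E := E) (x := x) (y := y))
theorem old_norm_inner_le (x y : E) : ‖⟪x, y⟫_A‖ ≤ ‖x‖ * ‖y‖ :=
  CStarModule.norm_inner_le (A := Aᵐᵒᵖ) E (x := x) (y := y)
theorem old_prod_inner (x y : C⋆ᵐᵒᵈ (E × F)) : ⟪x, y⟫_A = ⟪x.1, y.1⟫_A + ⟪x.2, y.2⟫_A := rfl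
theorem old_equiv_add (x y : C⋆ᵐᵒᵈ (E × F)) : WithCStarModuleOld.equiv (E × F) (x + y) =
    WithCStarModuleOld.equiv (E × F) x + WithCStarModuleOld.equiv (E × F) y := rfl


theorem eq_zero_of_inner_dense {D : Set E} (hD : Dense D) (z : E)
    (h : ∀ x ∈ D, ⟪x, z⟫_A = 0) : z = 0 := by
  have hlip : LipschitzWith ‖z‖₊ (fun x : E => ⟪x, z⟫_A) := by
    intro x y
    simp only [edist_nndist, ← ENNReal.coe_mul, ENNReal.coe_le_coe, ← NNReal.coe_le_coe,
      coe_nndist, NNReal.coe_mul, coe_nnnorm, dist_eq_norm]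
    rw [← old_inner_sub_left]
    exact (old_norm_inner_le _ _).trans (by rw [mul_comm])
  have : ∀ x : E, ⟪x, z⟫_A = 0 := by
    have := Continuous.ext_on hD hlip.continuous continuous_const (fun x hx => h x hx)
    exact fun x => congrFun this x
  exact CStarModuleOld.inner_self.mp (this z)

/-- for a densely defined adjointable operator `t` whose graph is
orthogonally complemented in `E ⊕ F`, with `V : E ⊕ F → F ⊕ E`, `V(x,y) = (y,-x)`,
one has `(V(G(t)))^⊥ = G(t*)`, so that `F ⊕ E = V(G(t)) ⊕ G(t*)`. -/
theorem ortho_V_graph_eq_graph_adjoint (t : E →ₗ.[ℂ] F) (s : F →ₗ.[ℂ] E)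
    (hmod : AModuleMap A t) (hdense : Dense (t.domain : Set E))
    (hadj : IsAdjoint A t s)
    (hgraph : OrthoComplemented A (graphSet t)) :
    ortho A {w : C⋆ᵐᵒᵈ (F × E) |
        ∃ x : t.domain, WithCStarModuleOld.equiv (F × E) w = (t x, -(x : E))} =
      {w : C⋆ᵐᵒᵈ (F × E) |
        ∃ y : s.domain, WithCStarModuleOld.equiv (F × E) w = ((y : F), s y)} ∧
    ∀ w : C⋆ᵐᵒᵈ (F × E),
      ∃ u ∈ {w : C⋆ᵐᵒᵈ (F × E) |
        ∃ x : t.domain, WithCStarModuleOld.equiv (F × E) w = (t x, -(x : E))},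
      ∃ v ∈ {w : C⋆ᵐᵒᵈ (F × E) |
        ∃ y : s.domain, WithCStarModuleOld.equiv (F × E) w = ((y : F), s y)},
      w = u + v := by
  set VG : Set (C⋆ᵐᵒᵈ (F × E)) :=
    {w | ∃ x : t.domain, WithCStarModuleOld.equiv (F × E) w = (t x, -(x : E))} with hVG
  set GS : Set (C⋆ᵐᵒᵈ (F × E)) :=
    {w | ∃ y : s.domain, WithCStarModuleOld.equiv (F × E) w = ((y : F), s y)} with hGS
  have key : ortho A VG = GS := by
    ext w
    constructor
    · rintro hw
      have h1 : ∀ x : t.domain, ⟪t x, w.1⟫_A = ⟪(x : E), w.2⟫_A := by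
        intro x
        have hu : (WithCStarModuleOld.equiv (F × E)).symm (t x, -(x : E)) ∈ VG :=
          ⟨x, by simp⟩
        have := hw _ hu
        rw [old_prod_inner] at this
        have h2 : ⟪((WithCStarModuleOld.equiv (F × E)).symm (t x, -(x : E))).1, w.1⟫_A
            = ⟪t x, w.1⟫_A := rfl
        have h3 : ⟪((WithCStarModuleOld.equiv (F × E)).symm (t x, -(x : E))).2, w.2⟫_A
            = ⟪-(x : E), w.2⟫_A := rfl
        rw [h2, h3, old_inner_neg_left] at this
        linear_combination (norm := module) this
      have hmem : w.1 ∈ s.domain := by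
        rw [← SetLike.mem_coe, hadj.dom]
        exact ⟨w.2, h1⟩
      refine ⟨⟨w.1, hmem⟩, ?_⟩
      have hz : s ⟨w.1, hmem⟩ = w.2 := by
        have hzero : (s ⟨w.1, hmem⟩ : E) - w.2 = 0 := by
          refine eq_zero_of_inner_dense hdense _ (fun x hx => ?_)
          rw [old_inner_sub_right]
          rw [← hadj.inner_eq ⟨x, hx⟩ ⟨w.1, hmem⟩, h1 ⟨x, hx⟩, sub_self]
        linear_combination (norm := module) hzero
      exact Prod.ext rfl hz.symm
    · rintro ⟨y, hy⟩ u ⟨x, hx⟩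
      rw [old_prod_inner]
      have hu1 : (u.1 : F) = t x := congrArg Prod.fst hx
      have hu2 : (u.2 : E) = -(x : E) := congrArg Prod.snd hx
      have hw1 : (w.1 : F) = (y : F) := congrArg Prod.fst hy
      have hw2 : (w.2 : E) = s y := congrArg Prod.snd hy
      rw [hu1, hu2, hw1, hw2, old_inner_neg_left,
        hadj.inner_eq x y, add_neg_cancel]
  refine ⟨key, fun w => ?_⟩
  obtain ⟨u', hu', v', hv', hsum⟩ :=
    hgraph ((WithCStarModuleOld.equiv (E × F)).symm (-(w.2), w.1))
  obtain ⟨x, hx⟩ := hu'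
  refine ⟨(WithCStarModuleOld.equiv (F × E)).symm (t x, -(x : E)), ⟨x, by simp⟩,
    (WithCStarModuleOld.equiv (F × E)).symm (v'.2, -(v'.1)), ?_, ?_⟩
  · rw [← key]
    intro u ⟨x', hx'⟩
    rw [old_prod_inner]
    have hu1 : (u.1 : F) = t x' := congrArg Prod.fst hx'
    have hu2 : (u.2 : E) = -(x' : E) := congrArg Prod.snd hx'
    have hg : (WithCStarModuleOld.equiv (E × F)).symm ((x' : E), t x') ∈ graphSet t :=
      ⟨x', by simp⟩
    have := hv' _ hg
    rw [old_prod_inner] at this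
    have h2 : ⟪((WithCStarModuleOld.equiv (E × F)).symm ((x' : E), t x')).1, v'.1⟫_A
        = ⟪(x' : E), v'.1⟫_A := rfl
    have h3 : ⟪((WithCStarModuleOld.equiv (E × F)).symm ((x' : E), t x')).2, v'.2⟫_A
        = ⟪t x', v'.2⟫_A := rfl
    rw [h2, h3] at this
    have hc1 : ⟪(u.1 : F), ((WithCStarModuleOld.equiv (F × E)).symm (v'.2, -(v'.1))).1⟫_A
        = ⟪(u.1 : F), v'.2⟫_A := rfl
    have hc2 : ⟪(u.2 : E), ((WithCStarModuleOld.equiv (F × E)).symm (v'.2, -(v'.1))).2⟫_A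
        = ⟪(u.2 : E), -(v'.1)⟫_A := rfl
    rw [hc1, hc2, hu1, hu2, old_inner_neg_left, old_inner_neg_right]
    linear_combination (norm := module) this
  · -- w = u + v
    have hx1 : (u'.1 : E) = (x : E) := congrArg Prod.fst hx
    have hx2 : (u'.2 : F) = t x := congrArg Prod.snd hx
    have hsum' : (-(w.2), w.1) =
        WithCStarModuleOld.equiv (E × F) u' + WithCStarModuleOld.equiv (E × F) v' := by
      rw [← old_equiv_add, ← hsum, Equiv.apply_symm_apply]
    have h1 : (-(w.2) : E) = u'.1 + v'.1 := congrArg Prod.fst hsum'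
    have h2 : (w.1 : F) = u'.2 + v'.2 := congrArg Prod.snd hsum' 
    apply (WithCStarModuleOld.equiv (F × E)).injective
    rw [old_equiv_add]
    simp only [Equiv.apply_symm_apply]
    refine Prod.ext ?_ ?_
    · show (w.1 : F) = (t x, -(x : E)).1 + (v'.2, -(v'.1)).1
      rw [h2, hx2]
    · show (w.2 : E) = (t x, -(x : E)).2 + (v'.2, -(v'.1)).2
      have := h1
      rw [hx1] at this
      show (w.2 : E) = -(x : E) + -(v'.1)
      linear_combination (norm := module) -this
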